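/- Moment generating function gap (Lemma 1): for every k ∈ {1,…,K} and every λ ≥ 0, almost surely E[e^{λU^k} | σ(D^k)] ≤ e^{(k/(2ε))λ²} · E[e^{λV^k} | σ(D^k)]. -/

import Mathlib

open MeasureTheory Finset

section Aux

lemma poly_ineq (q x : ℝ) (hq0 : 0 ≤ q) (hq1 : q ≤ 1) (hx : 0 ≤ x) :
    q * Real.exp x ≤ (q + x) * (1 - q + q * Real.exp x) := by
  have he1 : 1 ≤ Real.exp x := Real.one_le_exp hx
  have he2 : (1 - x) * Real.exp x ≤ 1 := by
    have h := Real.add_one_le_exp (-x)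
    have hp : Real.exp x > 0 := Real.exp_pos x
    have h2 := mul_le_mul_of_nonneg_right h hp.le
    rw [← Real.exp_add] at h2
    simp at h2
    nlinarith
  nlinarith [mul_nonneg hq0 hx, mul_nonneg (mul_nonneg hq0 hx) hx,
    mul_nonneg hq0 (sub_nonneg.mpr hq1), Real.exp_pos x,
    mul_nonneg (mul_nonneg hq0 hx) (Real.exp_pos x).le]

lemma bern_mgf_bound (q : ℝ) (hq0 : 0 ≤ q) (hq1 : q ≤ 1) (x : ℝ) (hx : 0 ≤ x) :
    1 - q + q * Real.exp x ≤ Real.exp (q * x + x ^ 2 / 2) := by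
  set A : ℝ → ℝ := fun y => 1 - q + q * Real.exp y with hA
  have hApos : ∀ y, 0 ≤ y → 0 < A y := by
    intro y hy
    have : 1 ≤ Real.exp y := Real.one_le_exp hy
    simp only [hA]; nlinarith
  set G : ℝ → ℝ := fun y => q * y + y ^ 2 / 2 - Real.log (A y) with hG
  have hderiv : ∀ y ∈ Set.Ioi (0:ℝ), HasDerivAt G (q + y - q * Real.exp y / A y) y := by
    intro y hy
    have h1 : HasDerivAt (fun z : ℝ => q * z + z ^ 2 / 2) (q + y) y := by
      have := ((hasDerivAt_id y).const_mul q).add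
        (((hasDerivAt_pow 2 y)).div_const 2)
      exact this.congr_deriv (by norm_num)
    have hA' : HasDerivAt A (q * Real.exp y) y := by
      exact ((Real.hasDerivAt_exp y).const_mul q).const_add (1 - q)
    have h2 : HasDerivAt (fun z => Real.log (A z)) (q * Real.exp y / A y) y :=
      hA'.log (hApos y (le_of_lt hy)).ne'
    exact h1.sub h2
  have hmono : MonotoneOn G (Set.Ici (0:ℝ)) := by
    apply monotoneOn_of_deriv_nonneg (convex_Ici 0)
    · apply ContinuousOn.sub
      · fun_prop
      · apply ContinuousOn.log
        · fun_prop
        · intro y hy; exact (hApos y hy).ne'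
    · intro y hy
      rw [interior_Ici] at hy
      exact (hderiv y hy).differentiableAt.differentiableWithinAt
    · intro y hy
      rw [interior_Ici] at hy
      rw [(hderiv y hy).deriv]
      have hAy := hApos y (le_of_lt hy)
      rw [sub_nonneg, div_le_iff₀ hAy]
      have h3 := poly_ineq q y hq0 hq1 (le_of_lt hy)
      simp only [hA]
      linarith [h3]
  have hG0 : G 0 = 0 := by simp [hG, hA]
  have := hmono (Set.mem_Ici.mpr le_rfl) (Set.mem_Ici.mpr hx) hx
  rw [hG0] at this
  have hlog : Real.log (A x) ≤ q * x + x ^ 2 / 2 := by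
    simp only [hG] at this; linarith
  calc A x = Real.exp (Real.log (A x)) := (Real.exp_log (hApos x hx)).symm
    _ ≤ Real.exp (q * x + x ^ 2 / 2) := Real.exp_le_exp.mpr hlog

lemma condexp_mono_of_setIntegral_le {Ω : Type*} {m m0 : MeasurableSpace Ω} (μ : Measure Ω)
    [IsProbabilityMeasure μ] (hm : m ≤ m0) {f g : Ω → ℝ}
    (hf : Integrable f μ) (hg : Integrable g μ)
    (h : ∀ s : Set Ω, MeasurableSet[m] s → ∫ ω in s, f ω ∂μ ≤ ∫ ω in s, g ω ∂μ) :
    μ[f|m] ≤ᵐ[μ] μ[g|m] := by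
  haveI : SigmaFinite (μ.trim hm) := by infer_instance
  set w : Ω → ℝ := fun ω => (μ[g|m]) ω - (μ[f|m]) ω with hw
  have hwSM : StronglyMeasurable[m] w := stronglyMeasurable_condExp.sub stronglyMeasurable_condExp
  have hwInt : Integrable w μ := integrable_condExp.sub integrable_condExp
  have hwT : Integrable w (μ.trim hm) := hwInt.trim hm hwSM
  have h0 : 0 ≤ᵐ[μ.trim hm] w := by
    apply ae_nonneg_of_forall_setIntegral_nonneg hwT
    intro s hs _
    rw [← setIntegral_trim hm hwSM hs]
    have h1 : ∫ ω in s, w ω ∂μ = (∫ ω in s, g ω ∂μ) - ∫ ω in s, f ω ∂μ := by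
      rw [hw]
      have hgc : Integrable (μ[g|m]) μ := integrable_condExp
      have hfc : Integrable (μ[f|m]) μ := integrable_condExp
      rw [integral_sub hgc.integrableOn hfc.integrableOn,
        setIntegral_condExp hm hg hs, setIntegral_condExp hm hf hs]
    rw [h1]
    linarith [h s hs]
  have h0' : 0 ≤ᵐ[μ] w := ae_le_of_ae_le_trim h0
  filter_upwards [h0'] with ω hω
  simpa [hw, sub_nonneg] using hω

lemma integrable_of_bdd {Ω : Type*} [MeasurableSpace Ω] {μ : Measure Ω} [IsFiniteMeasure μ]
    {h : Ω → ℝ} (hm : Measurable h) {c : ℝ} (hb : ∀ ω, |h ω| ≤ c) : Integrable h μ := by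
  refine (integrable_const c).mono' hm.aestronglyMeasurable ?_
  filter_upwards with ω
  simpa [Real.norm_eq_abs] using hb ω

end Aux

theorem mgf_gap
    {Ω : Type*} [MeasurableSpace Ω] (Pr : Measure Ω) [IsProbabilityMeasure Pr]
    (K T : ℕ) (hK : 1 ≤ K) (hT : 1 ≤ T)
    (ε : ℝ) (hε : 0 < ε)
    (D0 : ℕ) (hD0 : D0 ∈ Finset.Icc 1 T)
    (D : ℕ → Ω → ℕ) (hDmeas : ∀ k, Measurable (D k))
    (hD0as : ∀ᵐ ω ∂Pr, D 0 ω = D0)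
    (hDrange : ∀ k ∈ Finset.Icc 1 K, ∀ᵐ ω ∂Pr, D k ω ∈ Finset.Icc 1 T)
    (hMarkov : ∀ d : ℕ → ℕ, d 0 = D0 → (∀ k ∈ Finset.Icc 1 K, d k ∈ Finset.Icc 1 T) →
      (Pr {ω | ∀ k ∈ Finset.Icc 1 K, D k ω = d k}).toReal =
        ∏ k ∈ Finset.Icc 1 K,
          (Pr {ω | D k ω = d k ∧ D (k - 1) ω = d (k - 1)}).toReal /
            (Pr {ω | D (k - 1) ω = d (k - 1)}).toReal)
    (hLB : ∀ k < K, ∀ p ∈ Finset.Icc 1 T, ∀ q ∈ Finset.Icc 1 T,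
      0 < Pr {ω | D k ω = q} →
      ε ≤ (Pr {ω | D (k + 1) ω = p ∧ D k ω = q}).toReal / (Pr {ω | D k ω = q}).toReal)
    (N : ℕ → ℕ → ℕ → Ω → ℕ) (hNmeas : ∀ l s p, Measurable (N l s p))
    (hN01 : ∀ l s p ω, N l s p ω ≤ 1)
    (hNindep : ∀ S : Finset (ℕ × ℕ × ℕ),
      (∀ x ∈ S, x.1 ∈ Finset.Icc 1 K ∧ x.2.1 ∈ Finset.Icc 1 T ∧ x.2.2 ∈ Finset.Icc 1 T) →
      ∀ v : ℕ × ℕ × ℕ → ℕ, ∀ d : ℕ → ℕ,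
      Pr ({ω | ∀ k ≤ K, D k ω = d k} ∩ ⋂ x ∈ S, {ω | N x.1 x.2.1 x.2.2 ω = v x}) =
        Pr {ω | ∀ k ≤ K, D k ω = d k} * ∏ x ∈ S, Pr {ω | N x.1 x.2.1 x.2.2 ω = v x})
    (n : ℕ → ℕ → ℕ → ℝ) (hn : ∀ l s p, n l s p = ∫ ω, (N l s p ω : ℝ) ∂Pr)
    (U V : ℕ → Ω → ℝ)
    (hU : ∀ k ω, U k ω = ∑ l ∈ Finset.Icc 1 k, ∑ s ∈ Finset.Icc 1 T, ∑ p ∈ Finset.Icc 1 T,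
      (if s ≤ D l ω ∧ D (l - 1) ω = p then (1 : ℝ) else 0) * (N l s p ω : ℝ))
    (hV : ∀ k ω, V k ω = ∑ l ∈ Finset.Icc 1 k, ∑ s ∈ Finset.Icc 1 T, ∑ p ∈ Finset.Icc 1 T,
      (if s ≤ D l ω ∧ D (l - 1) ω = p then (1 : ℝ) else 0) * n l s p) :
    ∀ k ∈ Finset.Icc 1 K, ∀ lam : ℝ, 0 ≤ lam →
      ∀ᵐ ω ∂Pr,
        (MeasureTheory.condExp (MeasurableSpace.comap (D k) inferInstance) Pr
            (fun ω' => Real.exp (lam * U k ω'))) ω ≤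
          Real.exp ((k : ℝ) / (2 * ε) * lam ^ 2) *
            (MeasureTheory.condExp (MeasurableSpace.comap (D k) inferInstance) Pr
              (fun ω' => Real.exp (lam * V k ω'))) ω := by
  intro k hk lam hlam
  obtain ⟨hk1, hkK⟩ := Finset.mem_Icc.mp hk
  -- abbreviations
  set C : ℝ := Real.exp ((k : ℝ) / (2 * ε) * lam ^ 2) with hC
  set f : Ω → ℝ := fun ω => Real.exp (lam * U k ω) with hf
  set g : Ω → ℝ := fun ω => Real.exp (lam * V k ω) with hg
  -- ## step 1 : ε * T ≤ 1
  have hεT : (T : ℝ) * ε ≤ 1 := by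
    have hE0meas : MeasurableSet {ω | D 0 ω = D0} := (hDmeas 0) (by trivial : MeasurableSet ({D0} : Set ℕ))
    have hE0 : Pr {ω | D 0 ω = D0} = 1 := by
      rw [← prob_compl_eq_zero_iff hE0meas] at *
      exact ae_iff.mp hD0as
    have hLB0 : ∀ p ∈ Finset.Icc 1 T, ε ≤ (Pr {ω | D 1 ω = p ∧ D 0 ω = D0}).toReal := by
      intro p hp
      have h := hLB 0 hK p hp D0 hD0 (by rw [hE0]; norm_num)
      rw [hE0] at h
      simpa using h
    set E : ℕ → Set Ω := fun p => {ω | D 1 ω = p ∧ D 0 ω = D0} with hE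
    have hEmeas : ∀ p, MeasurableSet (E p) := by
      intro p
      have : E p = (D 1 ⁻¹' {p}) ∩ (D 0 ⁻¹' {D0}) := rfl
      rw [this]
      exact ((hDmeas 1) (by trivial)).inter ((hDmeas 0) (by trivial))
    have hEdisj : Set.PairwiseDisjoint (↑(Finset.Icc 1 T)) E := by
      intro p _ q _ hpq
      rw [Function.onFun, Set.disjoint_left]
      rintro ω ⟨h1, -⟩ ⟨h2, -⟩
      exact hpq (h1 ▸ h2 ▸ rfl)
    have hsum : ∑ p ∈ Finset.Icc 1 T, Pr (E p) = Pr (⋃ p ∈ Finset.Icc 1 T, E p) :=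
      (measure_biUnion_finset hEdisj (fun p _ => hEmeas p)).symm
    have hle1 : (Pr (⋃ p ∈ Finset.Icc 1 T, E p)).toReal ≤ 1 := by
      have := prob_le_one (μ := Pr) (s := ⋃ p ∈ Finset.Icc 1 T, E p)
      simpa using ENNReal.toReal_mono (by simp) this
    calc (T : ℝ) * ε = ∑ _p ∈ Finset.Icc 1 T, ε := by
          rw [Finset.sum_const, Nat.card_Icc]
          simp [nsmul_eq_mul]
      _ ≤ ∑ p ∈ Finset.Icc 1 T, (Pr (E p)).toReal := Finset.sum_le_sum hLB0
      _ = (∑ p ∈ Finset.Icc 1 T, Pr (E p)).toReal :=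
          (ENNReal.toReal_sum (fun p _ => measure_ne_top Pr (E p))).symm
      _ = (Pr (⋃ p ∈ Finset.Icc 1 T, E p)).toReal := by rw [hsum]
      _ ≤ 1 := hle1
  -- ## step 2 : basic facts about N and n
  have hNcoe : ∀ l s p ω, (N l s p ω : ℝ) = Set.indicator {ω' | N l s p ω' = 1}
      (fun _ => (1:ℝ)) ω := by
    intro l s p ω
    have := hN01 l s p ω
    interval_cases h : N l s p ω <;>
      simp [Set.indicator_apply, h]
  have hNsetmeas : ∀ l s p, MeasurableSet {ω' | N l s p ω' = 1} :=
    fun l s p => (hNmeas l s p) (by trivial : MeasurableSet ({1} : Set ℕ))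
  have hq_eq_n : ∀ l s p, n l s p = (Pr {ω' | N l s p ω' = 1}).toReal := by
    intro l s p
    rw [hn l s p]
    rw [integral_congr_ae (Filter.Eventually.of_forall (hNcoe l s p))]
    rw [integral_indicator_const _ (hNsetmeas l s p)]
    simp [measureReal_def]
  have hn0 : ∀ l s p, 0 ≤ n l s p := fun l s p => by
    rw [hq_eq_n]; exact ENNReal.toReal_nonneg
  have hn1 : ∀ l s p, n l s p ≤ 1 := by
    intro l s p
    rw [hq_eq_n]
    have := prob_le_one (μ := Pr) (s := {ω' | N l s p ω' = 1})
    simpa using ENNReal.toReal_mono (by simp) this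
  -- ## step 3 : integrability of f and g
  have hcondmeas : ∀ l s p : ℕ, MeasurableSet {ω : Ω | s ≤ D l ω ∧ D (l - 1) ω = p} := by
    intro l s p
    have : {ω : Ω | s ≤ D l ω ∧ D (l - 1) ω = p}
        = (D l ⁻¹' (Set.Ici s)) ∩ (D (l-1) ⁻¹' {p}) := rfl
    rw [this]
    exact ((hDmeas l) (by trivial)).inter ((hDmeas (l-1)) (by trivial))
  have hUmeas : Measurable (U k) := by
    rw [show U k = _ from funext (hU k)]
    apply Finset.measurable_sum
    intro l _
    apply Finset.measurable_sum
    intro s _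
    apply Finset.measurable_sum
    intro p _
    exact (Measurable.ite (hcondmeas l s p) measurable_const measurable_const).mul
      (measurable_from_top.comp (hNmeas l s p))
  have hVmeas : Measurable (V k) := by
    rw [show V k = _ from funext (hV k)]
    apply Finset.measurable_sum
    intro l _
    apply Finset.measurable_sum
    intro s _
    apply Finset.measurable_sum
    intro p _
    exact (Measurable.ite (hcondmeas l s p) measurable_const measurable_const).mul
      measurable_const
  have hterm01 : ∀ (c : Prop) [Decidable c] (r : ℝ), 0 ≤ r → r ≤ 1 →
      0 ≤ (if c then (1:ℝ) else 0) * r ∧ (if c then (1:ℝ) else 0) * r ≤ 1 := by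
    intro c _ r h0 h1
    by_cases hc : c
    · simp only [hc, if_true, one_mul]
      exact ⟨h0, h1⟩
    · simp only [hc, if_false, zero_mul, le_refl]
      norm_num
  have hsum_bdd : ∀ F : ℕ → ℕ → ℕ → ℝ,
      (∀ l s p, 0 ≤ F l s p ∧ F l s p ≤ 1) →
      0 ≤ (∑ l ∈ Finset.Icc 1 k, ∑ s ∈ Finset.Icc 1 T, ∑ p ∈ Finset.Icc 1 T, F l s p) ∧
      (∑ l ∈ Finset.Icc 1 k, ∑ s ∈ Finset.Icc 1 T, ∑ p ∈ Finset.Icc 1 T, F l s p)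
        ≤ (k * T * T : ℕ) := by
    intro F hF
    constructor
    · exact Finset.sum_nonneg fun l _ => Finset.sum_nonneg fun s _ =>
        Finset.sum_nonneg fun p _ => (hF l s p).1
    · calc (∑ l ∈ Finset.Icc 1 k, ∑ s ∈ Finset.Icc 1 T, ∑ p ∈ Finset.Icc 1 T, F l s p)
          ≤ ∑ _l ∈ Finset.Icc 1 k, ∑ _s ∈ Finset.Icc 1 T, ∑ _p ∈ Finset.Icc 1 T, (1:ℝ) :=
            Finset.sum_le_sum fun l _ => Finset.sum_le_sum fun s _ =>
              Finset.sum_le_sum fun p _ => (hF l s p).2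
        _ = (k * T * T : ℕ) := by
            simp [Finset.sum_const, Nat.card_Icc]
            push_cast
            ring
  have hUbdd : ∀ ω, 0 ≤ U k ω ∧ U k ω ≤ (k * T * T : ℕ) := by
    intro ω
    rw [hU k ω]
    apply hsum_bdd
    intro l s p
    apply hterm01
    · exact Nat.cast_nonneg _
    · exact_mod_cast hN01 l s p ω
  have hVbdd : ∀ ω, 0 ≤ V k ω ∧ V k ω ≤ (k * T * T : ℕ) := by
    intro ω
    rw [hV k ω]
    apply hsum_bdd
    intro l s p
    apply hterm01
    · exact hn0 l s p
    · exact hn1 l s p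
  have hfInt : Integrable f Pr := by
    apply integrable_of_bdd (c := Real.exp (lam * (k * T * T : ℕ)))
    · exact (Real.measurable_exp.comp (hUmeas.const_mul lam))
    · intro ω
      rw [abs_of_nonneg (Real.exp_pos _).le]
      exact Real.exp_le_exp.mpr (mul_le_mul_of_nonneg_left (hUbdd ω).2 hlam)
  have hgInt : Integrable g Pr := by
    apply integrable_of_bdd (c := Real.exp (lam * (k * T * T : ℕ)))
    · exact (Real.measurable_exp.comp (hVmeas.const_mul lam))
    · intro ω
      rw [abs_of_nonneg (Real.exp_pos _).le]
      exact Real.exp_le_exp.mpr (mul_le_mul_of_nonneg_left (hVbdd ω).2 hlam)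
  -- ## step 4 : the atoms
  classical
  set Paths : Finset (Fin (K+1) → ℕ) := Fintype.piFinset (fun _ => Finset.Icc 1 T) with hPaths
  set ext : (Fin (K+1) → ℕ) → ℕ → ℕ :=
    fun d j => d ⟨min j K, Nat.lt_succ_of_le (min_le_right j K)⟩ with hext
  set A : (Fin (K+1) → ℕ) → Set Ω := fun d => {ω | ∀ j ≤ K, D j ω = ext d j} with hA
  have hAmeas : ∀ d, MeasurableSet (A d) := by
    intro d
    have : A d = ⋂ (j : ℕ), ⋂ (_ : j ≤ K), D j ⁻¹' {ext d j} := by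
      ext ω; simp [hA, Set.mem_iInter]
    rw [this]
    exact MeasurableSet.iInter fun j => MeasurableSet.iInter fun _ =>
      (hDmeas j) (by trivial)
  have hAdisj : Set.PairwiseDisjoint (↑Paths) A := by
    intro d1 _ d2 _ hne
    rw [Function.onFun]
    rw [Set.disjoint_left]
    intro ω h1 h2
    apply hne
    funext i
    have e1 := h1 i.val (Nat.lt_succ_iff.mp i.isLt)
    have e2 := h2 i.val (Nat.lt_succ_iff.mp i.isLt)
    have hmin : min i.val K = i.val := min_eq_left (Nat.lt_succ_iff.mp i.isLt)
    simp only [hext] at e1 e2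
    have hfin : (⟨min (i : ℕ) K, Nat.lt_succ_of_le (min_le_right _ K)⟩ : Fin (K+1)) = i :=
      Fin.ext (by simpa using hmin)
    rw [hfin] at e1 e2
    exact e1.symm.trans e2
  have hcover : ∀ᵐ ω ∂Pr, ω ∈ ⋃ d ∈ Paths, A d := by
    have h2 : ∀ᵐ ω ∂Pr, ∀ j ∈ Finset.Icc 1 K, D j ω ∈ Finset.Icc 1 T :=
      (ae_ball_iff (Finset.Icc 1 K).countable_toSet).mpr hDrange
    filter_upwards [hD0as, h2] with ω h0 hr
    refine Set.mem_iUnion₂.mpr ⟨fun i => D i.val ω, ?_, ?_⟩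
    · rw [hPaths, Fintype.mem_piFinset]
      intro i
      by_cases hi : i.val = 0
      · rw [hi, h0]; exact hD0
      · exact hr i.val (Finset.mem_Icc.mpr ⟨by omega, Nat.lt_succ_iff.mp i.isLt⟩)
    · intro j hj
      simp only [hext]
      congr 1
      exact (min_eq_left hj).symm
  have hnull : Pr ((⋃ d ∈ Paths, A d)ᶜ) = 0 := ae_iff.mp hcover
  -- ## step 5 : the per-atom inequality
  have key : ∀ d ∈ Paths, ∫ ω in A d, f ω ∂Pr ≤ C * ∫ ω in A d, g ω ∂Pr := by
    intro d hd
    set c : ℝ := Real.exp lam - 1 with hc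
    have hc0 : 0 ≤ c := by
      have := Real.one_le_exp hlam
      rw [hc]; linarith
    set dv : ℕ → ℕ := ext d with hdv
    have hAd : A d = {ω | ∀ j ≤ K, D j ω = dv j} := rfl
    set Sd : Finset (ℕ × ℕ × ℕ) :=
      (Finset.Icc 1 k ×ˢ Finset.Icc 1 T ×ˢ Finset.Icc 1 T).filter
        (fun x => x.2.1 ≤ dv x.1 ∧ dv (x.1 - 1) = x.2.2) with hSd
    have hSdsub : ∀ x ∈ Sd, x.1 ∈ Finset.Icc 1 K ∧ x.2.1 ∈ Finset.Icc 1 T ∧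
        x.2.2 ∈ Finset.Icc 1 T := by
      intro x hx
      rw [hSd, Finset.mem_filter, Finset.mem_product] at hx
      obtain ⟨⟨ha', hb'⟩, -⟩ := hx
      rw [Finset.mem_product] at hb'
      exact ⟨Finset.mem_Icc.mpr ⟨(Finset.mem_Icc.mp ha').1,
        le_trans (Finset.mem_Icc.mp ha').2 hkK⟩, hb'.1, hb'.2⟩
    -- localization of the triple sums on the atom
    have hloc : ∀ (w : ℕ → ℕ → ℕ → ℝ) (ω : Ω), ω ∈ A d →
        (∑ l ∈ Finset.Icc 1 k, ∑ s ∈ Finset.Icc 1 T, ∑ p ∈ Finset.Icc 1 T,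
          (if s ≤ D l ω ∧ D (l - 1) ω = p then (1 : ℝ) else 0) * w l s p)
        = ∑ x ∈ Sd, w x.1 x.2.1 x.2.2 := by
      intro w ω hω
      have hω' : ∀ j ≤ K, D j ω = dv j := hω
      calc (∑ l ∈ Finset.Icc 1 k, ∑ s ∈ Finset.Icc 1 T, ∑ p ∈ Finset.Icc 1 T,
            (if s ≤ D l ω ∧ D (l - 1) ω = p then (1 : ℝ) else 0) * w l s p)
          = ∑ l ∈ Finset.Icc 1 k, ∑ s ∈ Finset.Icc 1 T, ∑ p ∈ Finset.Icc 1 T,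
            (if s ≤ dv l ∧ dv (l - 1) = p then w l s p else 0) := by
            refine Finset.sum_congr rfl fun l hl => Finset.sum_congr rfl fun s hs =>
              Finset.sum_congr rfl fun p hp => ?_
            have h1 : D l ω = dv l := hω' l (le_trans (Finset.mem_Icc.mp hl).2 hkK)
            have h2 : D (l - 1) ω = dv (l - 1) := by
              refine hω' (l - 1) ?_
              have := (Finset.mem_Icc.mp hl).2
              omega
            rw [h1, h2]
            by_cases hcnd : s ≤ dv l ∧ dv (l - 1) = p
            · simp [hcnd]
            · simp [hcnd]
        _ = ∑ x ∈ (Finset.Icc 1 k ×ˢ Finset.Icc 1 T ×ˢ Finset.Icc 1 T),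
            (if x.2.1 ≤ dv x.1 ∧ dv (x.1 - 1) = x.2.2 then w x.1 x.2.1 x.2.2 else 0) := by
            rw [Finset.sum_product]
            refine Finset.sum_congr rfl fun l hl => ?_
            rw [Finset.sum_product]
        _ = ∑ x ∈ Sd, w x.1 x.2.1 x.2.2 := by
            rw [hSd, Finset.sum_filter]
    have hUA : ∀ ω ∈ A d, U k ω = ∑ x ∈ Sd, (N x.1 x.2.1 x.2.2 ω : ℝ) := by
      intro ω hω
      rw [hU k ω]
      exact hloc (fun l s p => (N l s p ω : ℝ)) ω hω
    have hVA : ∀ ω ∈ A d, V k ω = ∑ x ∈ Sd, n x.1 x.2.1 x.2.2 := by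
      intro ω hω
      rw [hV k ω]
      exact hloc n ω hω
    set a : ℝ := (Pr (A d)).toReal with ha
    have ha0 : 0 ≤ a := ENNReal.toReal_nonneg
    set vd : ℝ := ∑ x ∈ Sd, n x.1 x.2.1 x.2.2 with hvd
    set q : (ℕ × ℕ × ℕ) → ℝ := fun x => (Pr {ω | N x.1 x.2.1 x.2.2 ω = 1}).toReal with hq
    have hq0 : ∀ x, 0 ≤ q x := fun x => ENNReal.toReal_nonneg
    have hqn : ∀ x : ℕ × ℕ × ℕ, q x = n x.1 x.2.1 x.2.2 :=
      fun x => (hq_eq_n x.1 x.2.1 x.2.2).symm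
    -- the g-side integral
    have hgA : ∫ ω in A d, g ω ∂Pr = a * Real.exp (lam * vd) := by
      have hconst : ∀ ω ∈ A d, g ω = Real.exp (lam * vd) := by
        intro ω hω
        show Real.exp (lam * V k ω) = _
        rw [hVA ω hω]
      rw [setIntegral_congr_fun (hAmeas d) hconst, setIntegral_const]
      simp [ha, smul_eq_mul, measureReal_def]
    -- the f-side integrand as a product
    have hfA : ∀ ω ∈ A d, f ω = ∏ x ∈ Sd, (c * (N x.1 x.2.1 x.2.2 ω : ℝ) + 1) := by
      intro ω hω
      show Real.exp (lam * U k ω) = _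
      rw [hUA ω hω, Finset.mul_sum, Real.exp_sum]
      refine Finset.prod_congr rfl fun x hx => ?_
      have hN := hN01 x.1 x.2.1 x.2.2 ω
      rcases Nat.le_one_iff_eq_zero_or_eq_one.mp hN with h | h <;> rw [h] <;> simp [hc]
    -- pointwise expansion of the product
    have hexpand : ∀ h : (ℕ × ℕ × ℕ) → ℝ, ∏ x ∈ Sd, (c * h x + 1)
        = ∑ R ∈ Sd.powerset, c ^ R.card * ∏ x ∈ R, h x := by
      intro h
      rw [Finset.prod_add]
      refine Finset.sum_congr rfl fun R hR => ?_
      rw [Finset.prod_const_one, mul_one, Finset.prod_mul_distrib, Finset.prod_const]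
    -- integrability of the partial products
    have hNprodInt : ∀ R : Finset (ℕ × ℕ × ℕ),
        Integrable (fun ω => ∏ x ∈ R, (N x.1 x.2.1 x.2.2 ω : ℝ)) Pr := by
      intro R
      apply integrable_of_bdd (c := 1)
      · exact Finset.measurable_prod R
          (fun x _ => measurable_from_top.comp (hNmeas x.1 x.2.1 x.2.2))
      · intro ω
        rw [abs_of_nonneg (Finset.prod_nonneg fun x _ => Nat.cast_nonneg _)]
        refine Finset.prod_le_one (fun x _ => Nat.cast_nonneg _) (fun x _ => ?_)
        exact_mod_cast hN01 x.1 x.2.1 x.2.2 ω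
    -- value of ∏ N as an indicator
    have hprodN : ∀ (R : Finset (ℕ × ℕ × ℕ)) (ω : Ω),
        (∏ x ∈ R, (N x.1 x.2.1 x.2.2 ω : ℝ))
        = if ∀ x ∈ R, N x.1 x.2.1 x.2.2 ω = 1 then 1 else 0 := by
      intro R ω
      by_cases hall : ∀ x ∈ R, N x.1 x.2.1 x.2.2 ω = 1
      · rw [if_pos hall]
        exact Finset.prod_eq_one fun x hx => by rw [hall x hx]; norm_num
      · rw [if_neg hall]
        push_neg at hall
        obtain ⟨x, hx, hne⟩ := hall
        have hz : N x.1 x.2.1 x.2.2 ω = 0 := by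
          have := hN01 x.1 x.2.1 x.2.2 ω; omega
        exact Finset.prod_eq_zero hx (by rw [hz]; norm_num)
    -- the key independence computation
    have hintAR : ∀ R ∈ Sd.powerset,
        ∫ ω in A d, (∏ x ∈ R, (N x.1 x.2.1 x.2.2 ω : ℝ)) ∂Pr = a * ∏ x ∈ R, q x := by
      intro R hR
      have hRsub : R ⊆ Sd := Finset.mem_powerset.mp hR
      have hER : MeasurableSet (⋂ x ∈ R, {ω : Ω | N x.1 x.2.1 x.2.2 ω = 1}) :=
        MeasurableSet.biInter R.countable_toSet (fun x _ => hNsetmeas x.1 x.2.1 x.2.2)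
      calc ∫ ω in A d, (∏ x ∈ R, (N x.1 x.2.1 x.2.2 ω : ℝ)) ∂Pr
          = ∫ ω in A d, Set.indicator (⋂ x ∈ R, {ω' : Ω | N x.1 x.2.1 x.2.2 ω' = 1})
              (fun _ => (1:ℝ)) ω ∂Pr := by
            refine setIntegral_congr_fun (hAmeas d) (fun ω _ => ?_)
            rw [hprodN R ω]
            simp [Set.indicator_apply, Set.mem_iInter]
        _ = ∫ _ω in A d ∩ (⋂ x ∈ R, {ω' : Ω | N x.1 x.2.1 x.2.2 ω' = 1}), (1:ℝ) ∂Pr :=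
            setIntegral_indicator hER
        _ = (Pr (A d ∩ ⋂ x ∈ R, {ω' : Ω | N x.1 x.2.1 x.2.2 ω' = 1})).toReal := by
            rw [setIntegral_const]; simp [measureReal_def]
        _ = (Pr (A d) * ∏ x ∈ R, Pr {ω' : Ω | N x.1 x.2.1 x.2.2 ω' = 1}).toReal := by
            rw [hAd]
            exact congrArg ENNReal.toReal
              (hNindep R (fun x hx => hSdsub x (hRsub hx)) (fun _ => 1) dv)
        _ = a * ∏ x ∈ R, q x := by
            rw [ENNReal.toReal_mul, ENNReal.toReal_prod]
    -- cardinality bound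
    have hcard : (Sd.card : ℝ) ≤ (k : ℝ) * T := by
      have hinj : Sd.card ≤ (Finset.Icc 1 k ×ˢ Finset.Icc 1 T).card := by
        apply Finset.card_le_card_of_injOn (fun x => (x.1, x.2.1))
        · intro x hx
          rw [hSd, Finset.mem_coe, Finset.mem_filter, Finset.mem_product] at hx
          obtain ⟨⟨ha', hb'⟩, -⟩ := hx
          rw [Finset.mem_product] at hb'
          exact Finset.mem_product.mpr ⟨ha', hb'.1⟩
        · intro x hx y hy hxy
          have hx' := Finset.mem_coe.mp hx
          have hy' := Finset.mem_coe.mp hy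
          rw [hSd, Finset.mem_filter] at hx' hy'
          obtain ⟨-, -, hx2⟩ := hx'
          obtain ⟨-, -, hy2⟩ := hy'
          obtain ⟨h1, h2⟩ := Prod.ext_iff.mp hxy
          simp only at h1 h2
          refine Prod.ext h1 (Prod.ext h2 ?_)
          rw [← hx2, ← hy2, h1]
      calc (Sd.card : ℝ) ≤ ((Finset.Icc 1 k ×ˢ Finset.Icc 1 T).card : ℝ) :=
            Nat.cast_le.mpr hinj
        _ = (k : ℝ) * T := by
            rw [Finset.card_product, Nat.card_Icc, Nat.card_Icc]
            push_cast
            ring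
    -- per-factor exponential bound
    have hfac : ∀ x : ℕ × ℕ × ℕ, c * q x + 1 ≤ Real.exp (q x * lam + lam ^ 2 / 2) := by
      intro x
      have h1 : c * q x + 1 = 1 - q x + q x * Real.exp lam := by rw [hc]; ring
      rw [h1]
      refine bern_mgf_bound (q x) (hq0 x) ?_ lam hlam
      rw [hqn x]
      exact hn1 x.1 x.2.1 x.2.2
    -- exponent comparison
    have hexp_le : (Sd.card : ℝ) * (lam ^ 2 / 2) ≤ (k : ℝ) / (2 * ε) * lam ^ 2 := by
      have h1 : (Sd.card : ℝ) * ε ≤ k := by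
        have h2 : (Sd.card : ℝ) * ε ≤ (k : ℝ) * T * ε :=
          mul_le_mul_of_nonneg_right hcard hε.le
        have h3 : (k : ℝ) * T * ε ≤ k * 1 := by
          rw [mul_assoc]
          exact mul_le_mul_of_nonneg_left hεT (Nat.cast_nonneg k)
        linarith
      rw [div_mul_eq_mul_div, le_div_iff₀ (by positivity : (0:ℝ) < 2 * ε)]
      nlinarith [mul_le_mul_of_nonneg_right h1 (sq_nonneg lam)]
    -- main chain
    calc ∫ ω in A d, f ω ∂Pr
        = ∫ ω in A d, (∏ x ∈ Sd, (c * (N x.1 x.2.1 x.2.2 ω : ℝ) + 1)) ∂Pr :=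
          setIntegral_congr_fun (hAmeas d) hfA
      _ = ∫ ω in A d, (∑ R ∈ Sd.powerset, c ^ R.card *
            ∏ x ∈ R, (N x.1 x.2.1 x.2.2 ω : ℝ)) ∂Pr := by
          refine setIntegral_congr_fun (hAmeas d) (fun ω _ => ?_)
          exact hexpand (fun x => (N x.1 x.2.1 x.2.2 ω : ℝ))
      _ = ∑ R ∈ Sd.powerset, ∫ ω in A d,
            (c ^ R.card * ∏ x ∈ R, (N x.1 x.2.1 x.2.2 ω : ℝ)) ∂Pr :=
          integral_finset_sum _ (fun R _ => ((hNprodInt R).const_mul _).integrableOn)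
      _ = ∑ R ∈ Sd.powerset, c ^ R.card * (a * ∏ x ∈ R, q x) := by
          refine Finset.sum_congr rfl fun R hR => ?_
          rw [integral_const_mul, hintAR R hR]
      _ = a * ∏ x ∈ Sd, (c * q x + 1) := by
          rw [hexpand q, Finset.mul_sum]
          refine Finset.sum_congr rfl fun R hR => ?_
          ring
      _ ≤ a * ∏ x ∈ Sd, Real.exp (q x * lam + lam ^ 2 / 2) := by
          refine mul_le_mul_of_nonneg_left ?_ ha0
          refine Finset.prod_le_prod (fun x _ => ?_) (fun x _ => hfac x)
          have := hq0 x
          nlinarith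
      _ = a * Real.exp (lam * vd + (Sd.card : ℝ) * (lam ^ 2 / 2)) := by
          rw [← Real.exp_sum]
          congr 1
          rw [Finset.sum_add_distrib, Finset.sum_const, ← Finset.sum_mul]
          have : ∑ x ∈ Sd, q x = vd := by
            rw [hvd]
            exact Finset.sum_congr rfl fun x _ => hqn x
          rw [this, nsmul_eq_mul]
          ring
      _ ≤ a * (C * Real.exp (lam * vd)) := by
          refine mul_le_mul_of_nonneg_left ?_ ha0
          rw [Real.exp_add, hC, mul_comm (Real.exp (lam * vd))]
          exact mul_le_mul_of_nonneg_right (Real.exp_le_exp.mpr hexp_le)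
            (Real.exp_pos _).le
      _ = C * ∫ ω in A d, g ω ∂Pr := by
          rw [hgA]
          ring
  -- ## step 6 : conditional expectation comparison
  have hmle : MeasurableSpace.comap (D k) inferInstance ≤ _ := (hDmeas k).comap_le
  have hCg : Integrable (C • g) Pr := hgInt.smul C
  have hset : ∀ s : Set Ω, MeasurableSet[MeasurableSpace.comap (D k) inferInstance] s →
      ∫ ω in s, f ω ∂Pr ≤ ∫ ω in s, (C • g) ω ∂Pr := by
    intro s hs
    obtain ⟨B, -, rfl⟩ := hs
    have hsm : MeasurableSet (D k ⁻¹' B) := (hDmeas k) (B.to_countable.measurableSet)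
    -- decompose the set integral over atoms
    have hsplit : ∀ h : Ω → ℝ, Integrable h Pr →
        ∫ ω in D k ⁻¹' B, h ω ∂Pr = ∑ d ∈ Paths, ∫ ω in (D k ⁻¹' B) ∩ A d, h ω ∂Pr := by
      intro h hInt
      have hseq : (D k ⁻¹' B : Set Ω) =ᵐ[Pr] ⋃ d ∈ Paths, ((D k ⁻¹' B) ∩ A d) := by
        have h1 : (D k ⁻¹' B) \ (⋃ d ∈ Paths, ((D k ⁻¹' B) ∩ A d)) ⊆ (⋃ d ∈ Paths, A d)ᶜ := by
          intro ω hω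
          obtain ⟨hB, hnot⟩ := hω
          intro hmem
          obtain ⟨d, hd, hAd⟩ := Set.mem_iUnion₂.mp hmem
          exact hnot (Set.mem_iUnion₂.mpr ⟨d, hd, hB, hAd⟩)
        rw [MeasureTheory.ae_eq_set]
        constructor
        · exact measure_mono_null h1 hnull
        · have : (⋃ d ∈ Paths, ((D k ⁻¹' B) ∩ A d)) \ (D k ⁻¹' B) = ∅ := by
            ext ω; simp only [Set.mem_diff, Set.mem_iUnion, Set.mem_inter_iff,
              Set.mem_empty_iff_false, iff_false, not_and, not_not]
            rintro ⟨d, hd, hB, -⟩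
            exact hB
          rw [this]; exact measure_empty
      rw [setIntegral_congr_set hseq]
      exact integral_biUnion_finset Paths (fun d _ => hsm.inter (hAmeas d))
        (hAdisj.mono_on fun d _ => Set.inter_subset_right)
        (fun d _ => hInt.integrableOn)
    rw [hsplit f hfInt, hsplit (C • g) hCg]
    apply Finset.sum_le_sum
    intro d hd
    by_cases hdk : ext d k ∈ B
    · have heq : (D k ⁻¹' B) ∩ A d = A d := by
        apply Set.Subset.antisymm Set.inter_subset_right
        intro ω hω
        refine ⟨?_, hω⟩
        show D k ω ∈ B
        rw [hω k hkK]
        exact hdk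
      rw [heq]
      calc ∫ ω in A d, f ω ∂Pr ≤ C * ∫ ω in A d, g ω ∂Pr := key d hd
        _ = ∫ ω in A d, (C • g) ω ∂Pr := by
            simp only [Pi.smul_apply, smul_eq_mul]
            rw [integral_const_mul]
    · have heq : (D k ⁻¹' B) ∩ A d = ∅ := by
        ext ω
        simp only [Set.mem_inter_iff, Set.mem_empty_iff_false, iff_false, not_and]
        intro hB hA'
        exact hdk ((hA' k hkK) ▸ hB)
      rw [heq]
      simp
  have hstep : Pr[f|MeasurableSpace.comap (D k) inferInstance] ≤ᵐ[Pr]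
      Pr[(C • g)|MeasurableSpace.comap (D k) inferInstance] :=
    condexp_mono_of_setIntegral_le Pr hmle hfInt hCg hset
  have hsmul : Pr[(C • g)|MeasurableSpace.comap (D k) inferInstance] =ᵐ[Pr]
      C • Pr[g|MeasurableSpace.comap (D k) inferInstance] := condExp_smul C g _
  filter_upwards [hstep, hsmul] with ω h1 h2
  calc (Pr[f|MeasurableSpace.comap (D k) inferInstance]) ω
      ≤ (Pr[(C • g)|MeasurableSpace.comap (D k) inferInstance]) ω := h1
    _ = C * (Pr[g|MeasurableSpace.comap (D k) inferInstance]) ω := by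
        rw [h2]; simp
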